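/- Let Ω ⊆ ℝ^N be a bounded open set. For each n let (y_n, D_n, f_n) be an admissible deformation triple on Ω, and let (y, D, f) be an admissible deformation triple on Ω. Assume: y_n → y almost everywhere in Ω; x ↦ det(f_n x) converges weakly in L¹(Ω) to x ↦ det(f x); and the Jacobians of the inverses are equi-integrable, i.e. for every ε > 0 there is δ > 0 such that for all n and every measurable S ⊆ ℝ^N with volume(S) < δ one has volume(D_n ∩ y_n⁻¹(S)) < ε. Then: (a) for every measurable set F ⊆ ℝ^N, volume(D_n ∩ y_n⁻¹(F)) → volume(D ∩ y⁻¹(F)) as n → ∞ (the weak L¹(ℝ^N) convergence of χ_{im_G(y_n,Ω)} det∇y_n⁻¹ to χ_{im_G(y,Ω)} det∇y⁻¹, tested setwise); and (b) for every measurable set F ⊆ ℝ^N with volume(F) < ∞, volume((D_n ∩ y_n⁻¹(F)) Δ (D ∩ y⁻¹(F))) → 0 as n → ∞ (L¹(Ω) convergence of the indicators of the preimages y_n⁻¹(F ∩ im_G(y_n,Ω))). -/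

import Mathlib

open MeasureTheory Filter Topology Set
open scoped ENNReal NNReal

noncomputable section

abbrev Euc (N : ℕ) := EuclideanSpace ℝ (Fin N)

/-- An a.e. approximately differentiable map on `A`, encoded as a triple `(u, D, f)`. -/
def ApproxDiffTriple {N : ℕ} (A D : Set (Euc N)) (u : Euc N → Euc N)
    (f : Euc N → Euc N →L[ℝ] Euc N) : Prop :=
  MeasurableSet D ∧ D ⊆ A ∧ volume (A \ D) = 0 ∧ ∀ x ∈ D, HasFDerivWithinAt u (f x) D x

/-- An admissible deformation on `Ω` (the class `𝒴(Ω)` of the paper). -/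
def AdmissibleDef {N : ℕ} (Ω D : Set (Euc N)) (y : Euc N → Euc N)
    (f : Euc N → Euc N →L[ℝ] Euc N) : Prop :=
  ApproxDiffTriple Ω D y f ∧ Set.InjOn y D ∧ (∀ x ∈ D, 0 < (f x).det) ∧
    IntegrableOn (fun x => (f x).det) Ω volume

/-- Weak convergence in `L¹(Ω)`, tested against bounded measurable functions. -/
def WeakL1ConvOn {N : ℕ} (Ω : Set (Euc N)) (u : ℕ → Euc N → ℝ) (v : Euc N → ℝ) : Prop :=
  ∀ g : Euc N → ℝ, Measurable g → (∃ C : ℝ, ∀ x, |g x| ≤ C) →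
    Tendsto (fun n => ∫ x in Ω, u n x * g x) atTop (𝓝 (∫ x in Ω, v x * g x))


lemma meas_inter_preimage {N : ℕ} {D S : Set (Euc N)} {u : Euc N → Euc N}
    (hD : MeasurableSet D) (hu : ContinuousOn u D) (hS : MeasurableSet S) :
    MeasurableSet (D ∩ u ⁻¹' S) := by
  have h1 : D ∩ u ⁻¹' S = (Subtype.val : D → Euc N) '' ((fun x : D => u x) ⁻¹' S) := by
    ext x
    constructor
    · rintro ⟨hxD, hxS⟩; exact ⟨⟨x, hxD⟩, hxS, rfl⟩
    · rintro ⟨⟨a, ha⟩, haS, rfl⟩; exact ⟨ha, haS⟩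
  rw [h1]
  exact MeasurableSet.subtype_image hD ((hu.restrict.measurable) hS)

lemma abscont {N : ℕ} {Ω D₀ : Set (Euc N)} {y₀ : Euc N → Euc N}
    {f₀ : Euc N → Euc N →L[ℝ] Euc N}
    (hΩm : MeasurableSet Ω) (hΩfin : volume Ω ≠ ⊤)
    (hD₀m : MeasurableSet D₀) (hD₀sub : D₀ ⊆ Ω)
    (hderiv : ∀ x ∈ D₀, HasFDerivWithinAt y₀ (f₀ x) D₀ x)
    (hinj : InjOn y₀ D₀) (hpos : ∀ x ∈ D₀, 0 < (f₀ x).det)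
    (hint : IntegrableOn (fun x => (f₀ x).det) Ω volume) :
    ∀ ε : ℝ≥0∞, 0 < ε → ∃ δ : ℝ≥0∞, 0 < δ ∧ ∀ S : Set (Euc N),
      MeasurableSet S → volume S < δ → volume (D₀ ∩ y₀ ⁻¹' S) < ε := by
  have hcont : ContinuousOn y₀ D₀ := fun x hx => (hderiv x hx).continuousWithinAt
  intro ε hε
  rcases eq_or_ne ε ⊤ with rfl | hεtop
  · refine ⟨1, one_pos, fun S _ _ => ?_⟩
    exact lt_of_le_of_lt (measure_mono (inter_subset_left.trans hD₀sub)) hΩfin.lt_top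
  have haesm : AEStronglyMeasurable (fun x => (f₀ x).det) (volume.restrict Ω) :=
    hint.aestronglyMeasurable
  have haem : AEMeasurable (fun x => (f₀ x).det) (volume.restrict Ω) := haesm.aemeasurable
  set g : Euc N → ℝ := haem.mk _ with hg
  have hgmeas : Measurable g := haem.measurable_mk
  have hgae : (fun x => (f₀ x).det) =ᵐ[volume.restrict Ω] g := haem.ae_eq_mk
  have hnull : volume ({x | (f₀ x).det ≠ g x} ∩ Ω) = 0 := by
    have := hgae
    rw [Filter.EventuallyEq, ae_iff] at this
    rw [← Measure.restrict_apply' hΩm]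
    exact this
  set E : ℕ → Set (Euc N) := fun k => D₀ ∩ {x | g x < 1 / (k + 1)} with hE
  have hEmeas : ∀ k, MeasurableSet (E k) :=
    fun k => hD₀m.inter (measurableSet_lt hgmeas measurable_const)
  have hEanti : Antitone E := by
    intro k l hkl x hx
    obtain ⟨hxD, hxg⟩ := hx
    simp only [mem_setOf_eq] at hxg
    refine ⟨hxD, mem_setOf_eq ▸ ?_⟩
    have h1 : ((k:ℝ) + 1) ≤ (l:ℝ) + 1 := by exact_mod_cast Nat.succ_le_succ hkl
    exact lt_of_lt_of_le hxg (one_div_le_one_div_of_le (by positivity) h1)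
  have hEint : volume (⋂ k, E k) = 0 := by
    refine measure_mono_null ?_ hnull
    intro x hx
    simp only [mem_iInter, hE, mem_inter_iff, mem_setOf_eq] at hx
    have hxD : x ∈ D₀ := (hx 0).1
    have hgle : g x ≤ 0 := by
      by_contra h'
      push_neg at h'
      obtain ⟨k, hk⟩ := exists_nat_one_div_lt h'
      exact absurd ((hx k).2) (not_lt.2 hk.le)
    exact ⟨fun h => absurd (h ▸ hgle) (not_le.2 (hpos x hxD)), hD₀sub hxD⟩
  have htend : Tendsto (fun k => volume (E k)) atTop (𝓝 0) := by
    have := tendsto_measure_iInter_atTop (μ := volume)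
      (fun k => (hEmeas k).nullMeasurableSet) hEanti
      ⟨0, (lt_of_le_of_lt (measure_mono (inter_subset_left.trans hD₀sub)) hΩfin.lt_top).ne⟩
    rwa [hEint] at this
  have hε2 : (0:ℝ≥0∞) < ε / 2 := ENNReal.div_pos hε.ne' (by norm_num)
  obtain ⟨k, hk⟩ := (htend.eventually (gt_mem_nhds hε2)).exists
  set c : ℝ := 1 / (k + 1) with hc
  have hcpos : 0 < c := by positivity
  have hoc0 : ENNReal.ofReal c ≠ 0 := (ENNReal.ofReal_pos.2 hcpos).ne'
  have hoct : ENNReal.ofReal c ≠ ⊤ := ENNReal.ofReal_ne_top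
  refine ⟨ENNReal.ofReal c * (ε / 2), ENNReal.mul_pos hoc0 hε2.ne', ?_⟩
  intro S hS hSδ
  set A : Set (Euc N) := D₀ ∩ y₀ ⁻¹' S with hA
  have hAmeas : MeasurableSet A := meas_inter_preimage hD₀m hcont hS
  have hAsub : A ⊆ D₀ := inter_subset_left
  set B : Set (Euc N) := A ∩ {x | c ≤ g x} with hB
  have hBmeas : MeasurableSet B := hAmeas.inter (measurableSet_le measurable_const hgmeas)
  have harea : (∫⁻ x in A, ENNReal.ofReal |(f₀ x).det|) = volume (y₀ '' A) :=
    lintegral_abs_det_fderiv_eq_addHaar_image volume hAmeas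
      (fun x hx => (hderiv x (hAsub hx)).mono hAsub) (hinj.mono hAsub)
  have himg : volume (y₀ '' A) ≤ volume S := by
    apply measure_mono
    rintro z ⟨x, hx, rfl⟩
    exact hx.2
  have haeA : (fun x => ENNReal.ofReal |(f₀ x).det|) =ᵐ[volume.restrict A]
      (fun x => ENNReal.ofReal (g x)) := by
    have h1 : (fun x => (f₀ x).det) =ᵐ[volume.restrict A] g :=
      ae_mono (Measure.restrict_mono (hAsub.trans hD₀sub) le_rfl) hgae
    have h2 : ∀ᵐ x ∂(volume.restrict A), x ∈ A := ae_restrict_mem hAmeas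
    filter_upwards [h1, h2] with x hx1 hx2
    rw [abs_of_pos (hpos x (hAsub hx2)), hx1]
  have hABle : ENNReal.ofReal c * volume B ≤ volume S := by
    calc ENNReal.ofReal c * volume B = ∫⁻ _ in B, ENNReal.ofReal c := by
          rw [setLIntegral_const, mul_comm]
      _ ≤ ∫⁻ x in B, ENNReal.ofReal (g x) := by
          refine setLIntegral_mono_ae hgmeas.ennreal_ofReal.aemeasurable ?_
          filter_upwards with x hx
          exact ENNReal.ofReal_le_ofReal hx.2
      _ ≤ ∫⁻ x in A, ENNReal.ofReal (g x) :=
          lintegral_mono' (Measure.restrict_mono inter_subset_left le_rfl) le_rfl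
      _ = ∫⁻ x in A, ENNReal.ofReal |(f₀ x).det| := (lintegral_congr_ae haeA).symm
      _ = volume (y₀ '' A) := harea
      _ ≤ volume S := himg
  have hBlt : volume B < ε / 2 := by
    have := lt_of_le_of_lt hABle hSδ
    exact (ENNReal.mul_lt_mul_iff_right hoc0 hoct).1 this
  have hsplit : A ⊆ E k ∪ B := by
    intro x hx
    by_cases hgx : g x < c
    · exact Or.inl ⟨hx.1, hgx⟩
    · exact Or.inr ⟨hx, not_lt.1 hgx⟩
  calc volume A ≤ volume (E k) + volume B := le_trans (measure_mono hsplit) (measure_union_le _ _)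
    _ < ε / 2 + ε / 2 := ENNReal.add_lt_add hk hBlt
    _ = ε := ENNReal.add_halves ε


/-- Convergence of Jacobians of inverses (setwise weak `L¹` convergence) and of
preimages of finite-measure sets. -/
theorem convergence_of_inverse_jacobians_and_preimages {N : ℕ} (hN : 2 ≤ N)
    (Ω : Set (Euc N)) (hΩo : IsOpen Ω) (hΩb : Bornology.IsBounded Ω)
    (y : ℕ → Euc N → Euc N) (D : ℕ → Set (Euc N)) (f : ℕ → Euc N → Euc N →L[ℝ] Euc N)
    (hadm : ∀ n, AdmissibleDef Ω (D n) (y n) (f n))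
    (y₀ : Euc N → Euc N) (D₀ : Set (Euc N)) (f₀ : Euc N → Euc N →L[ℝ] Euc N)
    (hadm₀ : AdmissibleDef Ω D₀ y₀ f₀)
    (hae : ∀ᵐ x ∂(volume.restrict Ω), Tendsto (fun n => y n x) atTop (𝓝 (y₀ x)))
    (hdet : WeakL1ConvOn Ω (fun n x => (f n x).det) (fun x => (f₀ x).det))
    (hequi : ∀ ε : ℝ≥0∞, 0 < ε → ∃ δ : ℝ≥0∞, 0 < δ ∧ ∀ n, ∀ S : Set (Euc N),
      MeasurableSet S → volume S < δ → volume (D n ∩ y n ⁻¹' S) < ε) :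
    (∀ F : Set (Euc N), MeasurableSet F →
        Tendsto (fun n => volume (D n ∩ y n ⁻¹' F)) atTop (𝓝 (volume (D₀ ∩ y₀ ⁻¹' F)))) ∧
    (∀ F : Set (Euc N), MeasurableSet F → volume F < ⊤ →
        Tendsto
          (fun n => volume (((D n ∩ y n ⁻¹' F) \ (D₀ ∩ y₀ ⁻¹' F)) ∪
            ((D₀ ∩ y₀ ⁻¹' F) \ (D n ∩ y n ⁻¹' F))))
          atTop (𝓝 0)) := by
  classical
  obtain ⟨⟨hD₀m, hD₀sub, hD₀null, hderiv₀⟩, hinj₀, hpos₀, hint₀⟩ := hadm₀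
  have hΩm : MeasurableSet Ω := hΩo.measurableSet
  have hΩfin : volume Ω < ⊤ := hΩb.measure_lt_top
  have hDm : ∀ n, MeasurableSet (D n) := fun n => (hadm n).1.1
  have hDsub : ∀ n, D n ⊆ Ω := fun n => (hadm n).1.2.1
  have hDnull : ∀ n, volume (Ω \ D n) = 0 := fun n => (hadm n).1.2.2.1
  have hderiv : ∀ n, ∀ x ∈ D n, HasFDerivWithinAt (y n) (f n x) (D n) x :=
    fun n => (hadm n).1.2.2.2
  have hcont : ∀ n, ContinuousOn (y n) (D n) :=
    fun n x hx => (hderiv n x hx).continuousWithinAt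
  have hcont₀ : ContinuousOn y₀ D₀ := fun x hx => (hderiv₀ x hx).continuousWithinAt
  haveI : IsFiniteMeasure (volume.restrict Ω : Measure (Euc N)) :=
    ⟨by rwa [Measure.restrict_apply_univ]⟩
  have haesm : ∀ n, AEStronglyMeasurable (y n) (volume.restrict Ω) := by
    intro n
    have heq : (D n : Set (Euc N)) =ᵐ[volume] Ω := by
      rw [ae_eq_set]
      constructor
      · rw [diff_eq_empty.2 (hDsub n)]; exact measure_empty
      · exact hDnull n
    rw [← Measure.restrict_congr_set heq]
    exact ((hcont n).aemeasurable (hDm n)).aestronglyMeasurable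
  have htim : TendstoInMeasure (volume.restrict Ω) y atTop y₀ :=
    tendstoInMeasure_of_tendsto_ae haesm hae
  have hMr : ∀ r : ℝ, 0 < r →
      Tendsto (fun n => volume ({x | r ≤ dist (y n x) (y₀ x)} ∩ Ω)) atTop (𝓝 0) := by
    intro r hr
    have := tendstoInMeasure_iff_dist.1 htim r hr
    simp only [Measure.restrict_apply' hΩm] at this
    exact this
  have habs := abscont hΩm hΩfin.ne hD₀m hD₀sub hderiv₀ hinj₀ hpos₀ hint₀
  -- Part (b)
  have hb : ∀ F : Set (Euc N), MeasurableSet F → volume F < ⊤ →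
      Tendsto (fun n => volume (((D n ∩ y n ⁻¹' F) \ (D₀ ∩ y₀ ⁻¹' F)) ∪
        ((D₀ ∩ y₀ ⁻¹' F) \ (D n ∩ y n ⁻¹' F)))) atTop (𝓝 0) := by
    intro F hF hFfin
    rw [ENNReal.tendsto_nhds_zero]
    intro ε hε
    have hε6 : (0:ℝ≥0∞) < ε / 6 := ENNReal.div_pos hε.ne' (by norm_num)
    obtain ⟨δe, hδe, hδeq⟩ := hequi (ε/6) hε6
    obtain ⟨δa, hδa, hδaq⟩ := habs (ε/6) hε6
    set δ := min δe δa with hδdef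
    have hδ : 0 < δ := lt_min hδe hδa
    obtain ⟨U, hFU, hUo, hUfin, hUF⟩ := hF.exists_isOpen_diff_lt hFfin.ne hδ.ne'
    obtain ⟨K, hKF, hKc, hFK⟩ := hF.exists_isCompact_diff_lt hFfin.ne hδ.ne'
    obtain ⟨r, hr, hrsub⟩ := hKc.exists_thickening_subset_open hUo (hKF.trans hFU)
    have hev := (ENNReal.tendsto_nhds_zero.mp (hMr r hr)) (ε/6) hε6
    filter_upwards [hev] with n hn
    have hT1 : volume (D n ∩ y n ⁻¹' (F \ K)) ≤ ε / 6 :=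
      (hδeq n (F \ K) (hF.diff hKc.measurableSet)
        (lt_of_lt_of_le hFK (min_le_left _ _))).le
    have hT4 : volume (D n ∩ y n ⁻¹' (U \ F)) ≤ ε / 6 :=
      (hδeq n (U \ F) (hUo.measurableSet.diff hF)
        (lt_of_lt_of_le hUF (min_le_left _ _))).le
    have hT2 : volume (D₀ ∩ y₀ ⁻¹' (U \ F)) ≤ ε / 6 :=
      (hδaq (U \ F) (hUo.measurableSet.diff hF)
        (lt_of_lt_of_le hUF (min_le_right _ _))).le
    have hT3 : volume (D₀ ∩ y₀ ⁻¹' (F \ K)) ≤ ε / 6 :=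
      (hδaq (F \ K) (hF.diff hKc.measurableSet)
        (lt_of_lt_of_le hFK (min_le_right _ _))).le
    have hsub : ((D n ∩ y n ⁻¹' F) \ (D₀ ∩ y₀ ⁻¹' F)) ∪
        ((D₀ ∩ y₀ ⁻¹' F) \ (D n ∩ y n ⁻¹' F)) ⊆
        ((Ω \ D n) ∪ (Ω \ D₀)) ∪
        (((D n ∩ y n ⁻¹' (F \ K)) ∪ (D₀ ∩ y₀ ⁻¹' (U \ F))) ∪
         ((D₀ ∩ y₀ ⁻¹' (F \ K)) ∪ (D n ∩ y n ⁻¹' (U \ F)))) ∪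
        ({x | r ≤ dist (y n x) (y₀ x)} ∩ Ω) := by
      rintro x (⟨⟨hxDn, hxF⟩, hne⟩ | ⟨⟨hxD0, hxF0⟩, hne⟩)
      · by_cases hx0 : x ∈ D₀
        · have hyF0 : y₀ x ∉ F := fun h => hne ⟨hx0, h⟩
          by_cases hK : y n x ∈ K
          · by_cases hU : y₀ x ∈ U
            · exact Or.inl (Or.inr (Or.inl (Or.inr ⟨hx0, hU, hyF0⟩)))
            · refine Or.inr ⟨?_, hDsub n hxDn⟩
              simp only [mem_setOf_eq]
              by_contra hlt
              push_neg at hlt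
              exact hU (hrsub (Metric.mem_thickening_iff.2
                ⟨y n x, hK, by rwa [dist_comm]⟩))
          · exact Or.inl (Or.inr (Or.inl (Or.inl ⟨hxDn, hxF, hK⟩)))
        · exact Or.inl (Or.inl (Or.inr ⟨hDsub n hxDn, hx0⟩))
      · by_cases hxn : x ∈ D n
        · have hyFn : y n x ∉ F := fun h => hne ⟨hxn, h⟩
          by_cases hK : y₀ x ∈ K
          · by_cases hU : y n x ∈ U
            · exact Or.inl (Or.inr (Or.inr (Or.inr ⟨hxn, hU, hyFn⟩)))
            · refine Or.inr ⟨?_, hD₀sub hxD0⟩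
              simp only [mem_setOf_eq]
              by_contra hlt
              push_neg at hlt
              exact hU (hrsub (Metric.mem_thickening_iff.2 ⟨y₀ x, hK, hlt⟩))
          · exact Or.inl (Or.inr (Or.inr (Or.inl ⟨hxD0, hxF0, hK⟩)))
        · exact Or.inl (Or.inl (Or.inl ⟨hD₀sub hxD0, hxn⟩))
    calc volume (((D n ∩ y n ⁻¹' F) \ (D₀ ∩ y₀ ⁻¹' F)) ∪
          ((D₀ ∩ y₀ ⁻¹' F) \ (D n ∩ y n ⁻¹' F)))
        ≤ volume (((Ω \ D n) ∪ (Ω \ D₀)) ∪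
            (((D n ∩ y n ⁻¹' (F \ K)) ∪ (D₀ ∩ y₀ ⁻¹' (U \ F))) ∪
             ((D₀ ∩ y₀ ⁻¹' (F \ K)) ∪ (D n ∩ y n ⁻¹' (U \ F)))) ∪
            ({x | r ≤ dist (y n x) (y₀ x)} ∩ Ω)) := measure_mono hsub
      _ ≤ (volume ((Ω \ D n) ∪ (Ω \ D₀)) +
            (volume (D n ∩ y n ⁻¹' (F \ K)) + volume (D₀ ∩ y₀ ⁻¹' (U \ F)) +
             (volume (D₀ ∩ y₀ ⁻¹' (F \ K)) + volume (D n ∩ y n ⁻¹' (U \ F))))) +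
            volume ({x | r ≤ dist (y n x) (y₀ x)} ∩ Ω) := by
          refine le_trans (measure_union_le _ _) (add_le_add ?_ le_rfl)
          refine le_trans (measure_union_le _ _) (add_le_add le_rfl ?_)
          refine le_trans (measure_union_le _ _) (add_le_add ?_ (measure_union_le _ _))
          exact measure_union_le _ _
      _ ≤ (0 + (ε/6 + ε/6 + (ε/6 + ε/6))) + ε/6 := by
          refine add_le_add (add_le_add ?_ (add_le_add (add_le_add hT1 hT2)
            (add_le_add hT3 hT4))) hn
          rw [measure_union_null (hDnull n) hD₀null]
      _ = 5 * (ε/6) := by ring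
      _ ≤ 6 * (ε/6) := by gcongr <;> norm_num
      _ ≤ ε := ENNReal.mul_div_le
  refine ⟨?_, hb⟩
  -- Part (a)
  intro F hF
  have hμ₀top : volume (D₀ ∩ y₀ ⁻¹' F) ≠ ⊤ :=
    (lt_of_le_of_lt (measure_mono (inter_subset_left.trans hD₀sub)) hΩfin).ne
  rw [ENNReal.tendsto_nhds hμ₀top]
  intro ε hε
  have hε4 : (0:ℝ≥0∞) < ε / 4 := ENNReal.div_pos hε.ne' (by norm_num)
  set G : ℕ → Set (Euc N) := fun k => D₀ ∩ y₀ ⁻¹' (Metric.ball (0:Euc N) (k:ℝ))ᶜ with hG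
  have hGmeas : ∀ k, MeasurableSet (G k) := fun k =>
    meas_inter_preimage hD₀m hcont₀ Metric.isOpen_ball.measurableSet.compl
  have hGanti : Antitone G := by
    intro k l hkl
    refine inter_subset_inter_right _ (preimage_mono (compl_subset_compl.2
      (Metric.ball_subset_ball ?_)))
    exact_mod_cast hkl
  have hGint : (⋂ k, G k) = ∅ := by
    ext x
    simp only [mem_iInter, mem_empty_iff_false, iff_false, not_forall]
    obtain ⟨k, hk⟩ := exists_nat_gt (dist (y₀ x) 0)
    exact ⟨k, fun h => h.2 (Metric.mem_ball.2 hk)⟩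
  have htG : Tendsto (fun k => volume (G k)) atTop (𝓝 0) := by
    have := tendsto_measure_iInter_atTop (μ := volume)
      (fun k => (hGmeas k).nullMeasurableSet) hGanti
      ⟨0, (lt_of_le_of_lt (measure_mono (inter_subset_left.trans hD₀sub)) hΩfin).ne⟩
    rwa [hGint, measure_empty] at this
  obtain ⟨k₀, hk₀⟩ := (htG.eventually (gt_mem_nhds hε4)).exists
  set B : Set (Euc N) := Metric.ball (0:Euc N) ((k₀:ℝ)+1) with hBdef
  set F' := F ∩ B with hF'def
  have hF'meas : MeasurableSet F' := hF.inter Metric.isOpen_ball.measurableSet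
  have hF'fin : volume F' < ⊤ :=
    lt_of_le_of_lt (measure_mono inter_subset_right) measure_ball_lt_top
  have hevb := (ENNReal.tendsto_nhds_zero.mp (hb F' hF'meas hF'fin)) (ε/4) hε4
  have hev1 := (ENNReal.tendsto_nhds_zero.mp (hMr 1 one_pos)) (ε/4) hε4
  filter_upwards [hevb, hev1] with n hsymm hm1
  have htail : volume (D n ∩ y n ⁻¹' Bᶜ) ≤ ε/4 + ε/4 := by
    have hsub : D n ∩ y n ⁻¹' Bᶜ ⊆
        (Ω \ D₀) ∪ (G k₀ ∪ ({x | (1:ℝ) ≤ dist (y n x) (y₀ x)} ∩ Ω)) := by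
      rintro x ⟨hxDn, hxB⟩
      by_cases hx0 : x ∈ D₀
      · by_cases hball : y₀ x ∈ Metric.ball (0:Euc N) (k₀:ℝ)
        · refine Or.inr (Or.inr ⟨?_, hDsub n hxDn⟩)
          simp only [mem_setOf_eq]
          have h1 : dist (y₀ x) 0 < (k₀:ℝ) := Metric.mem_ball.1 hball
          have h2 : (k₀:ℝ) + 1 ≤ dist (y n x) 0 := not_lt.1 (fun h => hxB (Metric.mem_ball.2 h))
          have h3 := dist_triangle (y n x) (y₀ x) 0
          linarith
        · exact Or.inr (Or.inl ⟨hx0, hball⟩)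
      · exact Or.inl ⟨hDsub n hxDn, hx0⟩
    calc volume (D n ∩ y n ⁻¹' Bᶜ)
        ≤ volume (Ω \ D₀) + (volume (G k₀) +
            volume ({x | (1:ℝ) ≤ dist (y n x) (y₀ x)} ∩ Ω)) :=
          le_trans (measure_mono hsub) (le_trans (measure_union_le _ _)
            (add_le_add le_rfl (measure_union_le _ _)))
      _ ≤ 0 + (ε/4 + ε/4) := add_le_add hD₀null.le (add_le_add hk₀.le hm1)
      _ = ε/4 + ε/4 := by rw [zero_add]
  have hAnsplit : volume (D n ∩ y n ⁻¹' F) ≤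
      volume (D n ∩ y n ⁻¹' F') + volume (D n ∩ y n ⁻¹' Bᶜ) := by
    refine le_trans (measure_mono ?_) (measure_union_le _ _)
    rintro x ⟨hxD, hxF⟩
    by_cases hxB : y n x ∈ B
    · exact Or.inl ⟨hxD, hxF, hxB⟩
    · exact Or.inr ⟨hxD, hxB⟩
  have hswap1 : volume (D n ∩ y n ⁻¹' F') ≤ volume (D₀ ∩ y₀ ⁻¹' F') +
      volume (((D n ∩ y n ⁻¹' F') \ (D₀ ∩ y₀ ⁻¹' F')) ∪
        ((D₀ ∩ y₀ ⁻¹' F') \ (D n ∩ y n ⁻¹' F'))) := by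
    refine le_trans (measure_mono ?_) (measure_union_le _ _)
    intro x hx
    by_cases h0 : x ∈ D₀ ∩ y₀ ⁻¹' F'
    · exact Or.inl h0
    · exact Or.inr (Or.inl ⟨hx, h0⟩)
  have hswap2 : volume (D₀ ∩ y₀ ⁻¹' F') ≤ volume (D n ∩ y n ⁻¹' F') +
      volume (((D n ∩ y n ⁻¹' F') \ (D₀ ∩ y₀ ⁻¹' F')) ∪
        ((D₀ ∩ y₀ ⁻¹' F') \ (D n ∩ y n ⁻¹' F'))) := by
    refine le_trans (measure_mono ?_) (measure_union_le _ _)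
    intro x hx
    by_cases h0 : x ∈ D n ∩ y n ⁻¹' F'
    · exact Or.inl h0
    · exact Or.inr (Or.inr ⟨hx, h0⟩)
  have hmono' : volume (D₀ ∩ y₀ ⁻¹' F') ≤ volume (D₀ ∩ y₀ ⁻¹' F) :=
    measure_mono (inter_subset_inter_right _ (preimage_mono inter_subset_left))
  have hmonon : volume (D n ∩ y n ⁻¹' F') ≤ volume (D n ∩ y n ⁻¹' F) :=
    measure_mono (inter_subset_inter_right _ (preimage_mono inter_subset_left))
  have h4ε : ε/4 + ε/4 + ε/4 + ε/4 ≤ ε := by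
    calc ε/4 + ε/4 + ε/4 + ε/4 = 4 * (ε/4) := by ring
      _ ≤ ε := ENNReal.mul_div_le
  have hup : volume (D n ∩ y n ⁻¹' F) ≤ volume (D₀ ∩ y₀ ⁻¹' F) + ε := by
    calc volume (D n ∩ y n ⁻¹' F)
        ≤ volume (D n ∩ y n ⁻¹' F') + volume (D n ∩ y n ⁻¹' Bᶜ) := hAnsplit
      _ ≤ (volume (D₀ ∩ y₀ ⁻¹' F') + ε/4) + (ε/4 + ε/4) :=
          add_le_add (le_trans hswap1 (add_le_add le_rfl hsymm)) htail
      _ ≤ volume (D₀ ∩ y₀ ⁻¹' F) + (ε/4 + ε/4 + ε/4 + ε/4) := by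
          rw [add_assoc]
          refine add_le_add hmono' ?_
          calc ε/4 + (ε/4 + ε/4) ≤ ε/4 + ε/4 + ε/4 + ε/4 := by
                rw [add_assoc, add_assoc]
                exact le_add_of_nonneg_left zero_le |>.trans le_rfl
            _ ≤ _ := le_rfl
      _ ≤ volume (D₀ ∩ y₀ ⁻¹' F) + ε := add_le_add le_rfl h4ε
  have hlow : volume (D₀ ∩ y₀ ⁻¹' F) ≤ volume (D n ∩ y n ⁻¹' F) + ε := by
    have h0split : volume (D₀ ∩ y₀ ⁻¹' F) ≤
        volume (D₀ ∩ y₀ ⁻¹' F') + volume (G k₀) := by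
      refine le_trans (measure_mono ?_) (measure_union_le _ _)
      rintro x ⟨hxD, hxF⟩
      by_cases hxB : y₀ x ∈ B
      · exact Or.inl ⟨hxD, hxF, hxB⟩
      · refine Or.inr ⟨hxD, fun h => hxB (Metric.ball_subset_ball (by linarith [ (le_refl (k₀:ℝ))]) h)⟩
    calc volume (D₀ ∩ y₀ ⁻¹' F)
        ≤ volume (D₀ ∩ y₀ ⁻¹' F') + volume (G k₀) := h0split
      _ ≤ (volume (D n ∩ y n ⁻¹' F') + ε/4) + ε/4 :=
          add_le_add (le_trans hswap2 (add_le_add le_rfl hsymm)) hk₀.le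
      _ ≤ volume (D n ∩ y n ⁻¹' F) + (ε/4 + ε/4) := by
          rw [add_assoc]
          exact add_le_add hmonon le_rfl
      _ ≤ volume (D n ∩ y n ⁻¹' F) + ε := by
          refine add_le_add le_rfl ?_
          calc ε/4 + ε/4 ≤ ε/4 + ε/4 + ε/4 + ε/4 := le_add_of_nonneg_right zero_le |>.trans (by rw [add_assoc]; exact le_add_of_nonneg_right zero_le)
            _ ≤ ε := h4ε
  exact ⟨tsub_le_iff_right.2 hlow, hup⟩
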